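/- Let P be a finite poset and f : P → ℝ a discrete Morse function with no short-up-troubled elements, where a is short-up-troubled if there exist x, y with a ≺ x ≺ y and f(x) < f(y) ≤ f(a). Assume furthermore the 2-wide condition holds. Then P has no up-troubled elements at all: there is no a and no x, y with a < x ≺ y and f(x) < f(y) ≤ f(a). -/

import Mathlib

open Finset
open scoped Classical

variable {P : Type*}

/-- `P` is 2-wide: whenever `a ⋖ b ⋖ c` there is `d ≠ b` with `a ⋖ d ⋖ c`. -/
def TwoWide (P : Type*) [PartialOrder P] : Prop :=
  ∀ a b c : P, a ⋖ b → b ⋖ c → ∃ d, d ≠ b ∧ a ⋖ d ∧ d ⋖ c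

/-- `f` is a discrete Morse function. -/
def IsDMF [PartialOrder P] (f : P → ℝ) : Prop :=
  ∀ b : P, {a | a ⋖ b ∧ f b ≤ f a}.Subsingleton ∧ {c | b ⋖ c ∧ f c ≤ f b}.Subsingleton

/-- `b` is (discrete-)critical for `f`. -/
def IsCrit [PartialOrder P] (f : P → ℝ) (b : P) : Prop :=
  (∀ a, a ⋖ b → f a < f b) ∧ (∀ c, b ⋖ c → f b < f c)

/-- `μ` is a parity rank function. -/
def ParityRank [PartialOrder P] (μ : P → ℕ) : Prop :=
  (∀ a, μ a ≤ 1) ∧ (∀ a, IsMin a → μ a = 0) ∧ ∀ a b : P, a ⋖ b → μ b = 1 - μ a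

/-- Sum of `(-1)^(length C)` over all nonempty chains `C` of `P` satisfying `p`. -/
noncomputable def chainSum [PartialOrder P] [Fintype P] (p : Finset P → Prop) : ℤ :=
  ∑ C ∈ Finset.univ.filter
      (fun C : Finset P => C.Nonempty ∧ IsChain (· ≤ ·) (↑C : Set P) ∧ p C),
    (-1 : ℤ) ^ (C.card - 1)

/-- `P` is downward Eulerian with respect to `μ`. -/
def DownEulerian [PartialOrder P] [Fintype P] (μ : P → ℕ) : Prop :=
  ∀ a : P, ¬ IsMin a →
    chainSum (fun C => ∀ x ∈ C, x < a) = (-1 : ℤ) ^ (μ a + 1) + 1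

lemma exists_cov_chain [PartialOrder P] [Fintype P] :
    ∀ x a : P, a < x → ∃ n, ∃ c : ℕ → P, c 0 = a ∧ c (n+1) = x ∧ ∀ i ≤ n, c i ⋖ c (i+1) := by
  intro x
  induction x using WellFoundedLT.induction with
  | ind x ih =>
    intro a hax
    classical
    have hne : (Finset.univ.filter (fun b : P => a ≤ b ∧ b < x)).Nonempty :=
      ⟨a, by simp [hax, le_refl]⟩
    obtain ⟨b, hb, hbmax⟩ : ∃ m ∈ Finset.univ.filter (fun b : P => a ≤ b ∧ b < x),
        ∀ z ∈ Finset.univ.filter (fun b : P => a ≤ b ∧ b < x), ¬ m < z := by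
      obtain ⟨m, hm⟩ := Finset.exists_maximal hne
      exact ⟨m, hm.prop, fun z hz hlt => hlt.not_ge (hm.2 hz hlt.le)⟩
    simp only [Finset.mem_filter, Finset.mem_univ, true_and] at hb
    have hbx : b ⋖ x := by
      refine ⟨hb.2, fun z hbz hzx => ?_⟩
      exact hbmax z (by simp [le_trans hb.1 hbz.le, hzx]) hbz
    rcases eq_or_lt_of_le hb.1 with rfl | hab
    · exact ⟨0, fun i => if i = 0 then a else x, by simp, by simp, by
        intro i hi; interval_cases i; simpa using hbx⟩
    · obtain ⟨n, c, hc0, hcn, hcov⟩ := ih b hb.2 a hab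
      refine ⟨n+1, fun i => if i ≤ n+1 then c i else x, by simpa, by simp, ?_⟩
      intro i hi
      rcases Nat.lt_or_ge i (n+1) with h1 | h1
      · have h2 : i ≤ n := Nat.lt_succ_iff.mp h1
        simpa [Nat.le_of_lt h1, h2] using hcov i h2
      · have hieq : i = n + 1 := le_antisymm hi h1
        subst hieq
        simpa [hcn] using hbx

lemma chain_aux [PartialOrder P] (hw : ∀ a b c : P, a ⋖ b → b ⋖ c → ∃ d, d ≠ b ∧ a ⋖ d ∧ d ⋖ c)
    (f : P → ℝ)
    (hf : ∀ b : P, {a | a ⋖ b ∧ f b ≤ f a}.Subsingleton ∧ {c | b ⋖ c ∧ f c ≤ f b}.Subsingleton)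
    (hs : ¬ ∃ a x y : P, a ⋖ x ∧ x ⋖ y ∧ f x < f y ∧ f y ≤ f a) :
    ∀ n : ℕ, ∀ c : ℕ → P, ∀ y : P, (∀ i ≤ n, c i ⋖ c (i+1)) → c (n+1) ⋖ y →
      f (c (n+1)) < f y → f y ≤ f (c 0) → False := by
  intro n
  induction n with
  | zero =>
    intro c y hcov hxy h1 h2
    exact hs ⟨c 0, c 1, y, hcov 0 (le_refl 0), hxy, h1, h2⟩
  | succ n ih =>
    intro c y hcov hxy h1 h2
    have hc1 : f (c 1) < f y := by
      by_contra h
      push_neg at h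
      exact ih (fun i => c (i+1)) y (fun i hi => hcov (i+1) (by omega)) hxy h1 h
    obtain ⟨d, hd, h0d, hd2⟩ := hw (c 0) (c 1) (c 2) (hcov 0 (by omega)) (hcov 1 (by omega))
    have hfd : f d < f y := by
      by_contra h
      push_neg at h
      refine ih (fun i => if i = 0 then d else c (i+1)) y ?_ (by simpa using hxy)
        (by simpa using h1) (by simpa using h)
      intro i hi
      rcases Nat.eq_zero_or_pos i with rfl | hpos
      · simpa using hd2
      · have : i ≠ 0 := hpos.ne'
        simpa [this] using hcov (i+1) (by omega)
    have := (hf (c 0)).2 (Set.mem_setOf.mpr ⟨hcov 0 (by omega), le_of_lt (lt_of_lt_of_le hc1 h2)⟩)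
      (Set.mem_setOf.mpr ⟨h0d, le_of_lt (lt_of_lt_of_le hfd h2)⟩)
    exact hd this.symm

theorem stmt18 [PartialOrder P] [Fintype P] (hw : TwoWide P) (f : P → ℝ)
    (hf : IsDMF f)
    (hs : ¬ ∃ a x y : P, a ⋖ x ∧ x ⋖ y ∧ f x < f y ∧ f y ≤ f a) :
    ¬ ∃ a x y : P, a < x ∧ x ⋖ y ∧ f x < f y ∧ f y ≤ f a := by
  rintro ⟨a, x, y, hax, hxy, h1, h2⟩
  obtain ⟨n, c, hc0, hcn, hcov⟩ := exists_cov_chain x a hax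
  exact chain_aux hw f hf hs n c y hcov (hcn ▸ hxy) (hcn ▸ h1) (hc0 ▸ h2)
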